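/- Let M_b ∈ {0,1}^{m×n} be an adjacency matrix with |E| ones, M_d = (1+d)M_b - d·J, and let (v,w) be a nontrivial positive stationary point with ||w||₂ = 1 and ||v||₂ ≤ √|E|, with v = M_d wᵀ, wᵀ = M_dᵀv/||v||₂². If A = {i : M_d(i,j) = 1 ∀j} is empty, then d ≤ m√|E|; in particular, for d > m√|E| there is no such stationary point with A = ∅. -/

import Mathlib

/-- If the set A of all-ones rows of M_b is empty, then any nontrivial
positive stationary point with ‖w‖₂ = 1, ‖v‖₂ ≤ √|E|, v = M_d wᵀ, wᵀ = M_dᵀv/‖v‖₂²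
forces d ≤ m√|E|; hence for d > m√|E| no such stationary point exists. -/
theorem stmt_17 (m n : ℕ) (Mb : Fin m → Fin n → ℝ)
    (hbin : ∀ i j, Mb i j = 0 ∨ Mb i j = 1)
    (d : ℝ) (hd0 : 0 < d)
    (Md : Fin m → Fin n → ℝ) (hMd : ∀ i j, Md i j = (1 + d) * Mb i j - d)
    (v : Fin m → ℝ) (w : Fin n → ℝ)
    (hv : ∀ i, 0 < v i) (hw : ∀ j, 0 < w j)
    (hwnorm : ∑ j, (w j) ^ 2 = 1)
    (hvbound : Real.sqrt (∑ i, (v i) ^ 2) ≤ Real.sqrt (∑ i, ∑ j, Mb i j))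
    (hsv : ∀ i, v i = ∑ j, Md i j * w j)
    (hsw : ∀ j, w j = (∑ i, Md i j * v i) / (∑ i, (v i) ^ 2))
    (hA : ∀ i, ∃ j, Mb i j = 0) :
    d ≤ m * Real.sqrt (∑ i, ∑ j, Mb i j) := by
  -- n ≥ 1
  have hn : 0 < n := by
    rcases Nat.eq_zero_or_pos n with h | h
    · subst h; simp at hwnorm
    · exact h
  obtain ⟨j0⟩ : Nonempty (Fin n) := ⟨⟨0, hn⟩⟩
  -- m ≥ 1
  have hm : 0 < m := by
    rcases Nat.eq_zero_or_pos m with h | h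
    · subst h
      have := hsw j0
      simp at this
      exact absurd this.symm (hw j0).ne
    · exact h
  obtain ⟨i0⟩ : Nonempty (Fin m) := ⟨⟨0, hm⟩⟩
  -- E ≥ 1
  have hMbnn : ∀ i j, (0:ℝ) ≤ Mb i j := by
    intro i j; rcases hbin i j with h | h <;> rw [h] <;> norm_num
  have hE1 : (1:ℝ) ≤ ∑ i, ∑ j, Mb i j := by
    by_cases hone : ∀ i j, Mb i j = 0
    · exfalso
      have hv0 := hsv i0
      have hwpos : 0 < ∑ j, w j := Finset.sum_pos (fun j _ => hw j) ⟨j0, Finset.mem_univ j0⟩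
      have : v i0 = -d * ∑ j, w j := by
        rw [hv0, Finset.mul_sum]
        refine Finset.sum_congr rfl fun j _ => ?_
        rw [hMd, hone]; ring
      nlinarith [hv i0]
    · push_neg at hone
      obtain ⟨i1, j1, h11⟩ := hone
      have h1 : Mb i1 j1 = 1 := (hbin i1 j1).resolve_left h11
      calc (1:ℝ) = Mb i1 j1 := h1.symm
        _ ≤ ∑ j, Mb i1 j :=
            Finset.single_le_sum (fun j _ => hMbnn i1 j) (Finset.mem_univ j1)
        _ ≤ ∑ i, ∑ j, Mb i j :=
            Finset.single_le_sum (fun i _ => Finset.sum_nonneg fun j _ => hMbnn i j)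
              (Finset.mem_univ i1)
  set L := ∑ i, v i with hL
  have hLpos : 0 < L := Finset.sum_pos (fun i _ => hv i) ⟨i0, Finset.mem_univ i0⟩
  have hSpos : 0 < ∑ i, (v i) ^ 2 :=
    Finset.sum_pos (fun i _ => pow_pos (hv i) 2) ⟨i0, Finset.mem_univ i0⟩
  -- key: (1+d) * v i < L for all i
  have key : ∀ i, (1 + d) * v i < L := by
    intro i
    obtain ⟨j, hj⟩ := hA i
    have hNpos : 0 < ∑ i', Md i' j * v i' := by
      have := hsw j
      by_contra hcon
      push_neg at hcon
      have : w j ≤ 0 := by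
        rw [hsw j]
        exact div_nonpos_of_nonpos_of_nonneg hcon hSpos.le
      exact absurd this (not_le.mpr (hw j))
    have hNeq : ∑ i', Md i' j * v i'
        = (1 + d) * (∑ i', Mb i' j * v i') - d * L := by
      rw [hL, Finset.mul_sum, Finset.mul_sum, ← Finset.sum_sub_distrib]
      refine Finset.sum_congr rfl fun i' _ => ?_
      rw [hMd]; ring
    have hT : ∑ i', Mb i' j * v i' ≤ L - v i := by
      have h0 : Mb i j * v i = 0 := by rw [hj]; ring
      calc ∑ i', Mb i' j * v i'
          = ∑ i' ∈ Finset.univ.erase i, Mb i' j * v i' :=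
            (Finset.sum_erase (f := fun i' => Mb i' j * v i') Finset.univ h0).symm
        _ ≤ ∑ i' ∈ Finset.univ.erase i, v i' := by
            refine Finset.sum_le_sum fun i' _ => ?_
            rcases hbin i' j with h | h <;> rw [h] <;> nlinarith [hv i', (hv i').le]
        _ = L - v i := by
            rw [hL, Finset.sum_erase_eq_sub (Finset.mem_univ i)]
    nlinarith [hv i]
  -- sum: (1+d) * L < m * L
  have hsum : (1 + d) * L < m * L := by
    calc (1 + d) * L = ∑ i, (1 + d) * v i := by rw [hL, Finset.mul_sum]
      _ < ∑ i : Fin m, L :=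
          Finset.sum_lt_sum_of_nonempty ⟨i0, Finset.mem_univ i0⟩ fun i _ => key i
      _ = m * L := by simp [Finset.sum_const, nsmul_eq_mul]
  have hdm : 1 + d < m := by
    have := (mul_lt_mul_iff_left₀ hLpos).mp hsum
    exact this
  have hsq : (1:ℝ) ≤ Real.sqrt (∑ i, ∑ j, Mb i j) := by
    rw [show (1:ℝ) = Real.sqrt 1 from (Real.sqrt_one).symm]
    exact Real.sqrt_le_sqrt hE1
  have hm1 : (1:ℝ) ≤ (m:ℝ) := by exact_mod_cast hm
  nlinarith [hsq, hm1, hdm]
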